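/- Let m ≥ 1 and let ζ^-, ζ^+ ∈ ℤ^m with ζ^-_i ≤ ζ^+_i for all i. For each subset I ⊆ {1,…,m} let c_I : ℤ^m → ℂ be arbitrary, and define operators (Dg)(μ) = ∑_I c_I(μ) g(μ + 𝟏_I) and (D^†f)(μ) = ∑_I c_I(μ - 𝟏_I) f(μ - 𝟏_I), where 𝟏_I is the indicator vector of I. Suppose f : ℤ^m → ℂ vanishes at every μ such that for some i either ζ^+_i < μ_i ≤ ζ^+_i + 1 or ζ^-_i - 1 ≤ μ_i < ζ^-_i. Then ∑_{μ ∈ ∏_i [ζ^-_i, ζ^+_i + 1]} (D^†f)(μ) g(μ) = ∑_{μ ∈ ∏_i [ζ^-_i, ζ^+_i]} f(μ) (Dg)(μ) for every g : ℤ^m → ℂ. -/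

import Mathlib

/-- Indicator vector of a subset `I` of indices. -/
def indVec {m : ℕ} (I : Finset (Fin m)) : Fin m → ℤ := fun i => if i ∈ I then 1 else 0

theorem stmt9 (m : ℕ) (hm : 1 ≤ m) (zm zp : Fin m → ℤ) (hz : ∀ i, zm i ≤ zp i)
    (c : Finset (Fin m) → (Fin m → ℤ) → ℂ) (f g : (Fin m → ℤ) → ℂ)
    (hf : ∀ μ : Fin m → ℤ,
      (∃ i, (zp i < μ i ∧ μ i ≤ zp i + 1) ∨ (zm i - 1 ≤ μ i ∧ μ i < zm i)) → f μ = 0) :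
    ∑ μ ∈ Finset.Icc zm (fun i => zp i + 1),
        (∑ I : Finset (Fin m), c I (μ - indVec I) * f (μ - indVec I)) * g μ
      = ∑ μ ∈ Finset.Icc zm zp,
        f μ * ∑ I : Finset (Fin m), c I μ * g (μ + indVec I) := by
  have key : ∀ I : Finset (Fin m),
      ∑ μ ∈ Finset.Icc zm (fun i => zp i + 1),
          c I (μ - indVec I) * f (μ - indVec I) * g μ
        = ∑ μ ∈ Finset.Icc zm zp, f μ * (c I μ * g (μ + indVec I)) := by
    intro I
    have hv0 : ∀ i, (0:ℤ) ≤ indVec I i := by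
      intro i; simp only [indVec]; split <;> norm_num
    have hv1 : ∀ i, indVec I i ≤ 1 := by
      intro i; simp only [indVec]; split <;> norm_num
    have hsub : Finset.Icc (zm + indVec I) (zp + indVec I)
        ⊆ Finset.Icc zm (fun i => zp i + 1) := by
      intro μ hμ
      rw [Finset.mem_Icc] at hμ ⊢
      constructor
      · intro i; have := hμ.1 i; simp only [Pi.add_apply] at this
        linarith [hv0 i]
      · intro i; have h := hμ.2 i; simp only [Pi.add_apply] at h
        show μ i ≤ zp i + 1
        linarith [hv1 i]
    have hzero : ∀ μ ∈ Finset.Icc zm (fun i => zp i + 1),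
        μ ∉ Finset.Icc (zm + indVec I) (zp + indVec I) →
        c I (μ - indVec I) * f (μ - indVec I) * g μ = 0 := by
      intro μ hμ hμ'
      rw [Finset.mem_Icc] at hμ hμ'
      have hf0 : f (μ - indVec I) = 0 := by
        apply hf
        by_cases h1 : zm + indVec I ≤ μ
        · have h2 : ¬ (μ ≤ zp + indVec I) := fun h => hμ' ⟨h1, h⟩
          rw [Pi.le_def] at h2; push_neg at h2
          obtain ⟨i, hi⟩ := h2
          refine ⟨i, ?_⟩
          simp only [Pi.add_apply] at hi
          by_cases hiI : i ∈ I
          · exfalso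
            have h2 := hμ.2 i
            simp only at h2
            simp only [indVec, hiI, if_pos] at hi
            linarith
          · left
            simp only [indVec, hiI, if_neg, not_false_iff, Pi.sub_apply] at hi ⊢
            have h2 := hμ.2 i
            simp only at h2
            constructor <;> simp_all <;> linarith
        · rw [Pi.le_def] at h1; push_neg at h1
          obtain ⟨i, hi⟩ := h1
          refine ⟨i, ?_⟩
          simp only [Pi.add_apply] at hi
          by_cases hiI : i ∈ I
          · right
            simp only [indVec, hiI, if_pos, Pi.sub_apply] at hi ⊢
            have := hμ.1 i
            constructor <;> linarith
          · exfalso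
            have := hμ.1 i
            simp only [indVec, hiI, if_neg, not_false_iff] at hi
            linarith
      rw [hf0]; ring
    rw [← Finset.sum_subset hsub hzero, ← Finset.map_add_right_Icc,
      Finset.sum_map]
    apply Finset.sum_congr rfl
    intro μ _
    simp only [addRightEmbedding_apply, add_sub_cancel_right]
    ring
  calc ∑ μ ∈ Finset.Icc zm (fun i => zp i + 1),
        (∑ I : Finset (Fin m), c I (μ - indVec I) * f (μ - indVec I)) * g μ
      = ∑ I : Finset (Fin m), ∑ μ ∈ Finset.Icc zm (fun i => zp i + 1),
          c I (μ - indVec I) * f (μ - indVec I) * g μ := by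
        rw [Finset.sum_comm]
        exact Finset.sum_congr rfl fun μ _ => Finset.sum_mul _ _ _
    _ = ∑ I : Finset (Fin m), ∑ μ ∈ Finset.Icc zm zp,
          f μ * (c I μ * g (μ + indVec I)) := Finset.sum_congr rfl fun I _ => key I
    _ = ∑ μ ∈ Finset.Icc zm zp,
          f μ * ∑ I : Finset (Fin m), c I μ * g (μ + indVec I) := by
        rw [Finset.sum_comm]
        exact Finset.sum_congr rfl fun μ _ => (Finset.mul_sum _ _ _).symm
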